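/- Let S be a dense subsemigroup of a Hausdorff semitopological semigroup (T,+) and let e be an idempotent of T. Then e*_S = {p ∈ βS : e ∈ ⋂_{A∈p} cl_T(A)}, the set of ultrafilters on S converging to e, is a compact subsemigroup of (βS,+) provided it is nonempty. -/
import Mathlib

open Filter Topology Set

attribute [local instance] Ultrafilter.add Ultrafilter.addSemigroup

universe u

section NearIdem

variable {T : Type u} [AddSemigroup T] [TopologicalSpace T]

/-- The set of ultrafilters on `S` converging to `e` (denoted `e*_S`). -/
def EStar (S : AddSubsemigroup T) (e : T) : Set (Ultrafilter S) :=
  {p | ∀ U ∈ nhds e, {s : S | (s : T) ∈ U} ∈ p}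

/-- `B ⊆ S` is syndetic near `e`. -/
def SyndeticNear (S : AddSubsemigroup T) (e : T) (B : Set S) : Prop :=
  ∀ U ∈ nhds e, ∃ F : Finset S, (∀ t ∈ F, (t : T) ∈ U) ∧
    ∃ V ∈ nhds e, ∀ s : S, (s : T) ∈ V → ∃ t ∈ F, t + s ∈ B

/-- `A ⊆ S` is topologically piecewise syndetic near `e`. -/
def TopPWSNear (S : AddSubsemigroup T) (e : T) (A : Set S) : Prop :=
  ∀ U ∈ nhds e, ∃ F : Finset S, (∀ t ∈ F, (t : T) ∈ U) ∧
    ∃ V ∈ nhds e, ∀ G : Finset S, ∀ O ∈ nhds e, ∃ x : S, (x : T) ∈ O ∧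
      ∀ g ∈ G, (g : T) ∈ V → ∃ t ∈ F, t + (g + x) ∈ A

/-- Left ideal of a subsemigroup `E` of `βM`. -/
def IsLeftIdealIn {M : Type*} [AddSemigroup M] (E L : Set (Ultrafilter M)) : Prop :=
  L.Nonempty ∧ L ⊆ E ∧ ∀ p ∈ E, ∀ q ∈ L, p + q ∈ L

/-- Minimal left ideal of `E`. -/
def IsMinimalLeftIdealIn {M : Type*} [AddSemigroup M] (E L : Set (Ultrafilter M)) : Prop :=
  IsLeftIdealIn E L ∧ ∀ L', IsLeftIdealIn E L' → L' ⊆ L → L' = L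

/-- The smallest ideal `K(E)`, the union of all minimal left ideals of `E`. -/
def SmallestIdeal {M : Type*} [AddSemigroup M] (E : Set (Ultrafilter M)) : Set (Ultrafilter M) :=
  {p | ∃ L, IsMinimalLeftIdealIn E L ∧ p ∈ L}

/-- `T_p(x) = p`-`lim_(s ∈ S) T_s(x)`. -/
noncomputable def TP {M : Type*} {X : Type*} [TopologicalSpace X]
    (Ts : M → X → X) (p : Ultrafilter M) (x : X) : X :=
  (p.map fun s => Ts s x).lim

/-- `x` is a uniformly recurrent point near `e`. -/
def UnifRecNear (S : AddSubsemigroup T) (e : T) {X : Type*} [TopologicalSpace X]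
    (Ts : S → X → X) (x : X) : Prop :=
  ∀ W ∈ nhds x, SyndeticNear S e {s : S | Ts s x ∈ W}

/-- `x` and `y` are proximal near `e` (characterized via `e*_S`). -/
noncomputable def ProximalNear (S : AddSubsemigroup T) (e : T) {X : Type*} [TopologicalSpace X]
    (Ts : S → X → X) (x y : X) : Prop :=
  ∃ p ∈ EStar S e, TP Ts p x = TP Ts p y

variable [T2Space T]

/-- `e*_S` is a compact subsemigroup of `(βS, +)` (provided it is nonempty). -/
theorem eStar_compact_subsemigroup (S : AddSubsemigroup T) (hdense : Dense (S : Set T))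
    (hl : ∀ t : T, Continuous fun x : T => t + x)
    (hr : ∀ t : T, Continuous fun x : T => x + t)
    (e : T) (he : e + e = e)
    (hne : (EStar S e).Nonempty) :
    IsCompact (EStar S e) ∧
      ∀ p ∈ EStar S e, ∀ q ∈ EStar S e, p + q ∈ EStar S e := by
  constructor
  · apply IsClosed.isCompact
    have : EStar S e = ⋂ U ∈ nhds e, {p : Ultrafilter S | {s : S | (s : T) ∈ U} ∈ p} := by
      ext p; simp [EStar]
    rw [this]
    exact isClosed_biInter fun U _ => ultrafilter_isClosed_basic _
  · intro p hp q hq U hU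
    obtain ⟨U', hU'sub, hU'open, heU'⟩ := mem_nhds_iff.mp hU
    -- `{x | x + e ∈ U'}` is a neighbourhood of `e` since `e + e = e ∈ U'`.
    have hV : {x : T | x + e ∈ U'} ∈ nhds e :=
      (hr e).continuousAt.preimage_mem_nhds (by rw [he]; exact hU'open.mem_nhds heU')
    have hVp : {s : S | (s : T) ∈ {x : T | x + e ∈ U'}} ∈ p := hp _ hV
    have key : {s : S | {t : S | ((s + t : S) : T) ∈ U} ∈ q} ∈ p := by
      filter_upwards [hVp] with s hs
      -- `↑s + e ∈ U'`, and `U'` is open, so `{x | ↑s + x ∈ U'} ∈ nhds e`.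
      have h1 : {x : T | (s : T) + x ∈ U'} ∈ nhds e :=
        (hl (s : T)).continuousAt.preimage_mem_nhds (hU'open.mem_nhds hs)
      filter_upwards [hq _ h1] with t ht
      exact hU'sub ht
    exact (Ultrafilter.eventually_add p q _).mpr key

end NearIdem
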